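/- For every integer e > 0 and d with 2e ≤ d ≤ 3e, the polynomial P_{d,e}(α,β,γ) = Σ_{a+b+c=d} (d!/(a! b! c!)) · C(e,a) C(e,b) C(e,c) α^a β^b γ^c in ℤ[α,β,γ] is not divisible by α + β + γ. -/
import Mathlib


open MvPolynomial in
/-- The polynomial `P_{d,e}` of the paper. -/
noncomputable def Ppoly (d e : ℕ) : MvPolynomial (Fin 3) ℤ :=
  ∑ a ∈ Finset.range (d + 1), ∑ b ∈ Finset.range (d + 1 - a),
    MvPolynomial.C ((d.factorial / (a.factorial * b.factorial * (d - a - b).factorial) *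
        e.choose a * e.choose b * e.choose (d - a - b) : ℤ)) *
      (X 0 ^ a * X 1 ^ b * X 2 ^ (d - a - b))

open MvPolynomial in
/-- Coefficient extraction after the substitution `α ↦ X, β ↦ 1, γ ↦ -X - 1`. -/
lemma ppoly_aux_coeff (k : ℤ) (a b c m : ℕ) :
    ((MvPolynomial.aeval ![Polynomial.X, (1 : Polynomial ℤ), -Polynomial.X - 1])
        (MvPolynomial.C k * (X 0 ^ a * X 1 ^ b * X 2 ^ c))).coeff m
      = k * (-1) ^ c * (if a ≤ m then (c.choose (m - a) : ℤ) else 0) := by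
  rw [map_mul, map_mul, map_mul, map_pow, map_pow, map_pow, aeval_C, aeval_X, aeval_X,
    aeval_X, ← Polynomial.C_eq_algebraMap]
  simp only [Matrix.cons_val_zero, Matrix.cons_val_one, Matrix.head_cons,
    Matrix.cons_val_two, Matrix.tail_cons, Matrix.head_fin_const, one_pow, mul_one]
  have hpow : (-Polynomial.X - 1 : Polynomial ℤ) ^ c
      = Polynomial.C ((-1 : ℤ) ^ c) * (Polynomial.X + 1) ^ c := by
    rw [show (-Polynomial.X - 1 : Polynomial ℤ) = -1 * (Polynomial.X + 1) by ring,
      mul_pow, map_pow, map_neg, map_one]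
  rw [hpow, show Polynomial.C k * (Polynomial.X ^ a *
      (Polynomial.C ((-1 : ℤ) ^ c) * (Polynomial.X + 1) ^ c))
      = Polynomial.C (k * (-1 : ℤ) ^ c) * ((Polynomial.X + 1) ^ c * Polynomial.X ^ a) by
        rw [map_mul]; ring]
  rw [Polynomial.coeff_C_mul, Polynomial.coeff_mul_X_pow',
    apply_ite (fun p => k * (-1 : ℤ) ^ c * p)]
  split_ifs with h
  · rw [Polynomial.coeff_X_add_one_pow]
  · rw [mul_zero]

open MvPolynomial in
/-- For `e > 0` and `2e ≤ d ≤ 3e`, `P_{d,e}` is not divisible by `α + β + γ`. -/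
theorem stmt12 (e d : ℕ) (he : 0 < e) (hd1 : 2 * e ≤ d) (hd2 : d ≤ 3 * e) :
    ¬ ((X 0 + X 1 + X 2 : MvPolynomial (Fin 3) ℤ) ∣ Ppoly d e) := by
  intro ⟨R, hR⟩
  set m : ℕ := d - 2 * e with hm
  have hme : m ≤ e := by omega
  have hd : d = m + 2 * e := by omega
  -- the substitution kills `X 0 + X 1 + X 2`, hence `Ppoly d e` too
  have h0 : (MvPolynomial.aeval ![Polynomial.X, (1 : Polynomial ℤ), -Polynomial.X - 1])
      (Ppoly d e) = 0 := by
    rw [hR, map_mul]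
    have hz : (MvPolynomial.aeval ![Polynomial.X, (1 : Polynomial ℤ), -Polynomial.X - 1])
        ((X 0 + X 1 + X 2 : MvPolynomial (Fin 3) ℤ)) = 0 := by
      simp only [map_add, aeval_X, Matrix.cons_val_zero, Matrix.cons_val_one,
        Matrix.head_cons, Matrix.cons_val_two, Matrix.tail_cons, Matrix.head_fin_const]
      ring
    rw [hz, zero_mul]
  -- compute the coefficient of `X ^ m` in the image of `Ppoly d e`
  have hc : ((MvPolynomial.aeval ![Polynomial.X, (1 : Polynomial ℤ), -Polynomial.X - 1])
      (Ppoly d e)).coeff m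
      = ((d.factorial / (m.factorial * e.factorial * e.factorial) : ℕ) : ℤ)
          * (e.choose m : ℤ) * (-1) ^ e := by
    rw [Ppoly, map_sum, Polynomial.finset_sum_coeff]
    simp only [map_sum, Polynomial.finset_sum_coeff, ppoly_aux_coeff]
    rw [Finset.sum_eq_single_of_mem m (by simp only [Finset.mem_range]; omega)]
    · rw [Finset.sum_eq_single_of_mem e (by simp only [Finset.mem_range]; omega)]
      · have hc' : d - m - e = e := by omega
        rw [hc', if_pos le_rfl, Nat.sub_self, Nat.choose_zero_right, Nat.choose_self]
        have hcast : ((d.factorial : ℤ) / ((m.factorial : ℤ) * (e.factorial : ℤ)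
            * (e.factorial : ℤ)))
            = ((d.factorial / (m.factorial * e.factorial * e.factorial) : ℕ) : ℤ) := by
          rw [Int.natCast_div]
          push_cast
          ring_nf
        rw [← hcast]
        push_cast
        ring
      · intro b hb hbe
        rcases lt_or_gt_of_ne hbe with hlt | hgt
        · have hlt2 : e < d - m - b := by omega
          rw [Nat.choose_eq_zero_of_lt hlt2]
          push_cast
          ring
        · rw [Nat.choose_eq_zero_of_lt hgt]
          push_cast
          ring
    · intro a ha hane
      apply Finset.sum_eq_zero
      intro b hb
      rcases lt_or_gt_of_ne hane with hlt | hgt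
      · simp only [Finset.mem_range] at hb
        rcases le_or_gt b e with hble | hbgt
        · have hlt2 : e < d - a - b := by omega
          rw [Nat.choose_eq_zero_of_lt hlt2]
          push_cast
          ring
        · rw [Nat.choose_eq_zero_of_lt hbgt]
          push_cast
          ring
      · rw [if_neg (by omega)]
        ring
  rw [h0, Polynomial.coeff_zero] at hc
  -- the right-hand side is nonzero: contradiction
  have hdvd : m.factorial * e.factorial * e.factorial ∣ d.factorial := by
    have h1 : e.factorial * e.factorial ∣ (2 * e).factorial := by
      have := Nat.factorial_mul_factorial_dvd_factorial_add e e
      simpa [two_mul] using this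
    have h2 : m.factorial * (2 * e).factorial ∣ d.factorial := by
      have := Nat.factorial_mul_factorial_dvd_factorial_add m (2 * e)
      rwa [← hd] at this
    calc m.factorial * e.factorial * e.factorial
        = m.factorial * (e.factorial * e.factorial) := by ring
      _ ∣ m.factorial * (2 * e).factorial := mul_dvd_mul_left _ h1
      _ ∣ d.factorial := h2
  have hpos : 0 < d.factorial / (m.factorial * e.factorial * e.factorial) :=
    Nat.div_pos (Nat.le_of_dvd d.factorial_pos hdvd) (by positivity)
  have hchoose : 0 < e.choose m := Nat.choose_pos hme
  have hne : ((d.factorial / (m.factorial * e.factorial * e.factorial) : ℕ) : ℤ)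
      * (e.choose m : ℤ) * (-1) ^ e ≠ 0 :=
    mul_ne_zero (mul_ne_zero (Int.natCast_ne_zero.mpr hpos.ne')
      (Int.natCast_ne_zero.mpr hchoose.ne')) (pow_ne_zero _ (by norm_num))
  exact hne hc.symm
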